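/- Let L be a simple finite-dimensional anticommutative algebra over a field F of characteristic zero and let r = Σᵢ aᵢ⊗bᵢ ∈ L⊗L be a non skew-symmetric solution of the classical Yang–Baxter equation such that r + τ(r) is L-invariant. Let D(L) be the Drinfeld double of L with respect to the comultiplication Δ_r(a) = Σᵢ aᵢa⊗bᵢ − aᵢ⊗abᵢ. Then D(L) is anticommutative and decomposes as a direct sum of two proper simple ideals, each of which is isomorphic as an algebra to L; in particular D(L) is semisimple and not simple. -/
import Mathlib


open TensorProduct

/-- `I` is a (two-sided) ideal for the product `prod`. -/
def IsIdealP {F M : Type*} [Field F] [AddCommGroup M] [Module F M]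
    (prod : M → M → M) (I : Submodule F M) : Prop :=
  ∀ x ∈ I, ∀ y : M, prod x y ∈ I ∧ prod y x ∈ I

/-- The ideal `I` is simple as an algebra with the restricted product. -/
def IsSimpleIdealP {F M : Type*} [Field F] [AddCommGroup M] [Module F M]
    (prod : M → M → M) (I : Submodule F M) : Prop :=
  (∃ x ∈ I, ∃ y ∈ I, prod x y ≠ 0) ∧
    ∀ J : Submodule F M, J ≤ I →
      (∀ x ∈ J, ∀ y ∈ I, prod x y ∈ J ∧ prod y x ∈ J) → J = ⊥ ∨ J = I

/-- The multiplication of the Drinfeld double `D(A) = A ⊕ A*` associated with the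
bilinear product `mul` and the comultiplication `Δ`:
`(a + f)(b + g) = (ab + f⇀b + a↼g) + (fg + f⇽b + a⇁g)`. -/
noncomputable def dmul {F A : Type*} [Field F] [AddCommGroup A] [Module F A]
    (mul : A →ₗ[F] A →ₗ[F] A) (Δ : A →ₗ[F] A ⊗[F] A)
    (p q : A × Module.Dual F A) : A × Module.Dual F A :=
  (mul p.1 q.1
      + TensorProduct.rid F A (LinearMap.lTensor A p.2 (Δ q.1))
      + TensorProduct.lid F A (LinearMap.rTensor A q.2 (Δ p.1)),
    Δ.dualMap (TensorProduct.dualDistrib F A A (p.2 ⊗ₜ[F] q.2))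
      + p.2.comp (mul q.1)
      + q.2.comp (mul.flip p.1))

/-- The classical Yang–Baxter equation for `r = ∑ i, a i ⊗ b i`. -/
def CYBE {F L : Type*} [Field F] [AddCommGroup L] [Module F L]
    (mul : L →ₗ[F] L →ₗ[F] L) {n : ℕ} (a b : Fin n → L) : Prop :=
  ∑ i : Fin n, ∑ j : Fin n,
      (mul (a i) (a j) ⊗ₜ[F] (b i ⊗ₜ[F] b j)
        - a i ⊗ₜ[F] (mul (a j) (b i) ⊗ₜ[F] b j)
        + a i ⊗ₜ[F] (a j ⊗ₜ[F] mul (b i) (b j))) = 0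

/-- The comultiplication `Δ_r(c) = ∑ i, (aᵢ·c) ⊗ bᵢ - aᵢ ⊗ (c·bᵢ)` induced by
`r = ∑ i, a i ⊗ b i`. -/
noncomputable def Δr {F L : Type*} [Field F] [AddCommGroup L] [Module F L]
    (mul : L →ₗ[F] L →ₗ[F] L) {n : ℕ} (a b : Fin n → L) : L →ₗ[F] L ⊗[F] L :=
  ∑ i, (((TensorProduct.mk F L L).flip (b i)).comp (mul (a i))
        - (TensorProduct.mk F L L (a i)).comp (mul.flip (b i)))

section DrinfeldAux

variable {F L : Type*} [Field F] [AddCommGroup L] [Module F L]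

/-- `Rmat v w f = ∑ i, f (w i) • v i`. -/
noncomputable def Rmat {n : ℕ} (v w : Fin n → L) : Module.Dual F L →ₗ[F] L :=
  ∑ i, (LinearMap.applyₗ (w i)).smulRight (v i)

lemma Rmat_apply {n : ℕ} (v w : Fin n → L) (f : Module.Dual F L) :
    Rmat v w f = ∑ i, f (w i) • v i := by simp [Rmat]

/-- The projection `p₊(x, f) = x + ∑ f(bᵢ) • aᵢ`. -/
noncomputable def dpP {n : ℕ} (a b : Fin n → L) : L × Module.Dual F L →ₗ[F] L :=
  LinearMap.fst F L (Module.Dual F L) + (Rmat a b).comp (LinearMap.snd F L (Module.Dual F L))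

/-- The projection `p₋(x, f) = x - ∑ f(aᵢ) • bᵢ`. -/
noncomputable def dpM {n : ℕ} (a b : Fin n → L) : L × Module.Dual F L →ₗ[F] L :=
  LinearMap.fst F L (Module.Dual F L) - (Rmat b a).comp (LinearMap.snd F L (Module.Dual F L))

lemma dpP_apply {n : ℕ} (a b : Fin n → L) (p : L × Module.Dual F L) :
    dpP a b p = p.1 + ∑ i, p.2 (b i) • a i := by simp [dpP, Rmat_apply]

lemma dpM_apply {n : ℕ} (a b : Fin n → L) (p : L × Module.Dual F L) :
    dpM a b p = p.1 - ∑ i, p.2 (a i) • b i := by simp [dpM, Rmat_apply]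

variable (mul : L →ₗ[F] L →ₗ[F] L) {n : ℕ} (a b : Fin n → L)

lemma Δr_apply (c : L) :
    Δr mul a b c = ∑ i, (mul (a i) c ⊗ₜ[F] b i - a i ⊗ₜ[F] mul c (b i)) := by
  simp [Δr]

lemma dmul_fst (p q : L × Module.Dual F L) :
    (dmul mul (Δr mul a b) p q).1
      = mul p.1 q.1
        + ∑ i, (p.2 (b i) • mul (a i) q.1 - p.2 (mul q.1 (b i)) • a i)
        + ∑ i, (q.2 (mul (a i) p.1) • b i - q.2 (a i) • mul p.1 (b i)) := by
  simp [dmul, Δr_apply, map_sum, TensorProduct.rid_tmul, TensorProduct.lid_tmul,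
    LinearMap.lTensor_tmul, LinearMap.rTensor_tmul]

lemma dmul_snd (p q : L × Module.Dual F L) (c : L) :
    (dmul mul (Δr mul a b) p q).2 c
      = (∑ i, (p.2 (mul (a i) c) * q.2 (b i) - p.2 (a i) * q.2 (mul c (b i))))
        + p.2 (mul q.1 c) + q.2 (mul c p.1) := by
  simp [dmul, Δr_apply, map_sum, mul_comm]

lemma inv_contract
    (hinv : ∀ c : L, ∑ i, (mul (a i) c ⊗ₜ[F] b i + a i ⊗ₜ[F] mul (b i) c
        + mul (b i) c ⊗ₜ[F] a i + b i ⊗ₜ[F] mul (a i) c) = 0)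
    (f : Module.Dual F L) (c : L) :
    ∑ i, (f (mul (a i) c) • b i + f (a i) • mul (b i) c
      + f (mul (b i) c) • a i + f (b i) • mul (a i) c) = 0 := by
  have h2 : (TensorProduct.lid F L) (LinearMap.rTensor L f
      (∑ i, (mul (a i) c ⊗ₜ[F] b i + a i ⊗ₜ[F] mul (b i) c
        + mul (b i) c ⊗ₜ[F] a i + b i ⊗ₜ[F] mul (a i) c))) = 0 := by
    rw [hinv c]; simp
  simpa [map_sum] using h2

lemma cybe_contract1 (hcybe : CYBE mul a b) (f g : Module.Dual F L) :
    ∑ i, ∑ j, ((f (b i) * g (b j)) • mul (a i) (a j)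
      - (f (mul (a j) (b i)) * g (b j)) • a i
      + (f (a j) * g (mul (b i) (b j))) • a i) = 0 := by
  replace hcybe : ∑ i : Fin n, ∑ j : Fin n,
      (mul (a i) (a j) ⊗ₜ[F] (b i ⊗ₜ[F] b j)
        - a i ⊗ₜ[F] (mul (a j) (b i) ⊗ₜ[F] b j)
        + a i ⊗ₜ[F] (a j ⊗ₜ[F] mul (b i) (b j))) = 0 := hcybe
  have h2 : (TensorProduct.rid F L) (LinearMap.lTensor L
      (TensorProduct.dualDistrib F L L (f ⊗ₜ[F] g))
      (∑ i : Fin n, ∑ j : Fin n,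
      (mul (a i) (a j) ⊗ₜ[F] (b i ⊗ₜ[F] b j)
        - a i ⊗ₜ[F] (mul (a j) (b i) ⊗ₜ[F] b j)
        + a i ⊗ₜ[F] (a j ⊗ₜ[F] mul (b i) (b j))))) = 0 := by
    rw [hcybe]; simp
  simpa [map_sum] using h2

lemma cybe_contract2 (hcybe : CYBE mul a b) (f g : Module.Dual F L) :
    ∑ i, ∑ j, ((f (mul (a i) (a j)) * g (b i)) • b j
      - (f (a i) * g (mul (a j) (b i))) • b j
      + (f (a i) * g (a j)) • mul (b i) (b j)) = 0 := by
  replace hcybe : ∑ i : Fin n, ∑ j : Fin n,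
      (mul (a i) (a j) ⊗ₜ[F] (b i ⊗ₜ[F] b j)
        - a i ⊗ₜ[F] (mul (a j) (b i) ⊗ₜ[F] b j)
        + a i ⊗ₜ[F] (a j ⊗ₜ[F] mul (b i) (b j))) = 0 := hcybe
  have h2 : (TensorProduct.lid F L) (LinearMap.rTensor L g
      ((TensorProduct.lid F (L ⊗[F] L)) (LinearMap.rTensor (L ⊗[F] L) f
      (∑ i : Fin n, ∑ j : Fin n,
      (mul (a i) (a j) ⊗ₜ[F] (b i ⊗ₜ[F] b j)
        - a i ⊗ₜ[F] (mul (a j) (b i) ⊗ₜ[F] b j)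
        + a i ⊗ₜ[F] (a j ⊗ₜ[F] mul (b i) (b j))))))) = 0 := by
    rw [hcybe]; simp
  simpa [map_sum, smul_smul] using h2

lemma hom_plus (hanti : ∀ v : L, mul v v = 0) (hcybe : CYBE mul a b)
    (hinv : ∀ c : L, ∑ i, (mul (a i) c ⊗ₜ[F] b i + a i ⊗ₜ[F] mul (b i) c
        + mul (b i) c ⊗ₜ[F] a i + b i ⊗ₜ[F] mul (a i) c) = 0)
    (p q : L × Module.Dual F L) :
    dpP a b (dmul mul (Δr mul a b) p q) = mul (dpP a b p) (dpP a b q) := by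
  obtain ⟨x, f⟩ := p
  obtain ⟨y, g⟩ := q
  have hskew : ∀ u v : L, mul u v = -mul v u := by
    intro u v
    have h := hanti (u + v)
    simp only [map_add, LinearMap.add_apply, hanti, zero_add, add_zero] at h
    exact eq_neg_of_add_eq_zero_right h
  have hI0 := inv_contract mul a b hinv g x
  have hC0 := cybe_contract1 mul a b hcybe f g
  simp only [Finset.sum_add_distrib, Finset.sum_sub_distrib] at hI0 hC0
  have hC' : (∑ x1 : Fin n, ∑ x2 : Fin n, (g (b x1) * f (b x2)) • mul (a x2) (a x1))
      = (∑ x1 : Fin n, ∑ i : Fin n, (f (mul (a i) (b x1)) * g (b i)) • a x1)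
        - ∑ x1 : Fin n, ∑ i : Fin n, (f (a i) * g (mul (b x1) (b i))) • a x1 := by
    have e1 : (∑ x1 : Fin n, ∑ x2 : Fin n, (g (b x1) * f (b x2)) • mul (a x2) (a x1))
        = ∑ i : Fin n, ∑ j : Fin n, (f (b i) * g (b j)) • mul (a i) (a j) := by
      rw [Finset.sum_comm]
      exact Finset.sum_congr rfl fun i _ => Finset.sum_congr rfl fun j _ => by rw [mul_comm]
    rw [e1]
    linear_combination (norm := module) hC0
  simp only [dpP_apply, dmul_fst, dmul_snd]
  simp only [map_add, map_sum, map_smul, LinearMap.add_apply, LinearMap.sum_apply,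
    LinearMap.smul_apply, Finset.smul_sum, smul_smul, smul_add, smul_sub,
    add_smul, sub_smul, Finset.sum_smul,
    Finset.sum_add_distrib, Finset.sum_sub_distrib]
  have h1 : ∀ i : Fin n, mul x (b i) = -mul (b i) x := fun i => hskew x (b i)
  have h2 : ∀ i : Fin n, mul x (a i) = -mul (a i) x := fun i => hskew x (a i)
  simp only [h1, h2, smul_neg, Finset.sum_neg_distrib]
  linear_combination (norm := module) hI0 - hC'

lemma hom_minus (hanti : ∀ v : L, mul v v = 0) (hcybe : CYBE mul a b)
    (hinv : ∀ c : L, ∑ i, (mul (a i) c ⊗ₜ[F] b i + a i ⊗ₜ[F] mul (b i) c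
        + mul (b i) c ⊗ₜ[F] a i + b i ⊗ₜ[F] mul (a i) c) = 0)
    (p q : L × Module.Dual F L) :
    dpM a b (dmul mul (Δr mul a b) p q) = mul (dpM a b p) (dpM a b q) := by
  obtain ⟨x, f⟩ := p
  obtain ⟨y, g⟩ := q
  have hskew : ∀ u v : L, mul u v = -mul v u := by
    intro u v
    have h := hanti (u + v)
    simp only [map_add, LinearMap.add_apply, hanti, zero_add, add_zero] at h
    exact eq_neg_of_add_eq_zero_right h
  have hI0 := inv_contract mul a b hinv f y
  have hC0 := cybe_contract2 mul a b hcybe f g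
  simp only [Finset.sum_add_distrib, Finset.sum_sub_distrib] at hI0 hC0
  have hC' : (∑ x1 : Fin n, ∑ x2 : Fin n, (g (a x1) * f (a x2)) • mul (b x2) (b x1))
      = (∑ x1 : Fin n, ∑ i : Fin n, (f (a i) * g (mul (a x1) (b i))) • b x1)
        - ∑ x1 : Fin n, ∑ i : Fin n, (f (mul (a i) (a x1)) * g (b i)) • b x1 := by
    have e1 : (∑ x1 : Fin n, ∑ x2 : Fin n, (g (a x1) * f (a x2)) • mul (b x2) (b x1))
        = ∑ i : Fin n, ∑ j : Fin n, (f (a i) * g (a j)) • mul (b i) (b j) := by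
      rw [Finset.sum_comm]
      exact Finset.sum_congr rfl fun i _ => Finset.sum_congr rfl fun j _ => by rw [mul_comm]
    have e2 : (∑ x1 : Fin n, ∑ i : Fin n, (f (a i) * g (mul (a x1) (b i))) • b x1)
        = ∑ i : Fin n, ∑ j : Fin n, (f (a i) * g (mul (a j) (b i))) • b j := by
      rw [Finset.sum_comm]
    have e3 : (∑ x1 : Fin n, ∑ i : Fin n, (f (mul (a i) (a x1)) * g (b i)) • b x1)
        = ∑ i : Fin n, ∑ j : Fin n, (f (mul (a i) (a j)) * g (b i)) • b j := by
      rw [Finset.sum_comm]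
    rw [e1, e2, e3]
    linear_combination (norm := module) hC0
  simp only [dpM_apply, dmul_fst, dmul_snd]
  simp only [map_add, map_sub, map_sum, map_smul, LinearMap.add_apply, LinearMap.sub_apply,
    LinearMap.sum_apply, LinearMap.smul_apply, Finset.smul_sum, smul_smul, smul_add, smul_sub,
    add_smul, sub_smul, Finset.sum_smul,
    Finset.sum_add_distrib, Finset.sum_sub_distrib]
  have h1 : ∀ i : Fin n, mul y (b i) = -mul (b i) y := fun i => hskew y (b i)
  have h2 : ∀ i : Fin n, mul y (a i) = -mul (a i) y := fun i => hskew y (a i)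
  simp only [h1, h2, smul_neg, Finset.sum_neg_distrib, map_neg, mul_neg, neg_smul, neg_neg]
  linear_combination (norm := module) hI0 - hC'


section FinAux
variable [FiniteDimensional F L]

noncomputable def auxTheta : L ⊗[F] L ≃ₗ[F] (Module.Dual F L →ₗ[F] L) :=
  (TensorProduct.congr (Module.evalEquiv F L) (LinearEquiv.refl F L)).trans
    (dualTensorHomEquiv F (Module.Dual F L) L)

lemma auxTheta_tmul (u v : L) (f : Module.Dual F L) :
    auxTheta (u ⊗ₜ[F] v) f = f u • v := by
  simp [auxTheta, dualTensorHomEquiv, Module.evalEquiv]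

lemma auxTheta_sum {n : ℕ} (v w : Fin n → L) :
    auxTheta (∑ i, v i ⊗ₜ[F] w i) = Rmat w v := by
  ext f
  rw [map_sum]
  simp only [LinearMap.sum_apply, auxTheta_tmul, Rmat_apply]

end FinAux

end DrinfeldAux

set_option maxHeartbeats 1000000

theorem stmt19 {F L : Type*} [Field F] [CharZero F] [AddCommGroup L] [Module F L]
    [FiniteDimensional F L] (mul : L →ₗ[F] L →ₗ[F] L)
    -- `L` is anticommutative
    (hanti : ∀ v : L, mul v v = 0)
    -- `L` is simple
    (hsimple : (∃ x y : L, mul x y ≠ 0) ∧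
      ∀ I : Submodule F L, (∀ x ∈ I, ∀ y : L, mul x y ∈ I ∧ mul y x ∈ I) → I = ⊥ ∨ I = ⊤)
    -- `r = ∑ i, a i ⊗ b i` is a solution of the CYBE
    {n : ℕ} (a b : Fin n → L) (hcybe : CYBE mul a b)
    -- `r` is not skew-symmetric: `τ(r) ≠ -r`
    (hns : ∑ i, b i ⊗ₜ[F] a i ≠ -∑ i, a i ⊗ₜ[F] b i)
    -- `r + τ(r)` is `L`-invariant
    (hinv : ∀ c : L, ∑ i, (mul (a i) c ⊗ₜ[F] b i + a i ⊗ₜ[F] mul (b i) c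
        + mul (b i) c ⊗ₜ[F] a i + b i ⊗ₜ[F] mul (a i) c) = 0) :
    -- `D(L)` (w.r.t. `Δ_r`) is anticommutative and is the direct sum of two proper
    -- simple ideals, each isomorphic as an algebra to `L`
    (∀ p : L × Module.Dual F L, dmul mul (Δr mul a b) p p = 0) ∧
    ∃ L₁ L₂ : Submodule F (L × Module.Dual F L),
      L₁ ≠ ⊥ ∧ L₁ ≠ ⊤ ∧ L₂ ≠ ⊥ ∧ L₂ ≠ ⊤ ∧ IsCompl L₁ L₂ ∧
      IsIdealP (dmul mul (Δr mul a b)) L₁ ∧ IsIdealP (dmul mul (Δr mul a b)) L₂ ∧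
      IsSimpleIdealP (dmul mul (Δr mul a b)) L₁ ∧ IsSimpleIdealP (dmul mul (Δr mul a b)) L₂ ∧
      (∃ e : L ≃ₗ[F] L₁, ∀ u v : L,
        (e (mul u v) : L × Module.Dual F L) = dmul mul (Δr mul a b) (e u) (e v)) ∧
      (∃ e : L ≃ₗ[F] L₂, ∀ u v : L,
        (e (mul u v) : L × Module.Dual F L) = dmul mul (Δr mul a b) (e u) (e v)) := by

  classical
  have hskew : ∀ u v : L, mul u v = -mul v u := by
    intro u v
    have h := hanti (u + v)
    simp only [map_add, LinearMap.add_apply, hanti, zero_add, add_zero] at h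
    exact eq_neg_of_add_eq_zero_right h
  obtain ⟨⟨x₀, y₀, hxy₀⟩, hsimp2⟩ := hsimple
  have hx₀ : x₀ ≠ 0 := fun h => hxy₀ (by rw [h]; simp)
  have : Nontrivial L := ⟨x₀, 0, hx₀⟩
  -- the symmetric invariant map T
  set T : Module.Dual F L →ₗ[F] L := Rmat a b + Rmat b a with hTdef
  have hTapp : ∀ f : Module.Dual F L,
      T f = (∑ i, f (b i) • a i) + ∑ i, f (a i) • b i := by
    intro f; simp [hTdef, Rmat_apply]
  have hTne : T ≠ 0 := by
    intro h
    apply hns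
    have h1 : auxTheta ((∑ i, b i ⊗ₜ[F] a i) + ∑ i, a i ⊗ₜ[F] b i) = 0 := by
      rw [map_add, auxTheta_sum, auxTheta_sum, ← hTdef, h]
    have h2 : (∑ i, b i ⊗ₜ[F] a i) + ∑ i, a i ⊗ₜ[F] b i = 0 :=
      (LinearEquiv.map_eq_zero_iff _).mp h1
    exact eq_neg_of_add_eq_zero_left h2
  have hTflip : ∀ (g : Module.Dual F L) (c : L),
      T (g.comp (mul.flip c)) = -mul (T g) c := by
    intro g c
    have hI0 := inv_contract mul a b hinv g c
    simp only [Finset.sum_add_distrib] at hI0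
    rw [hTapp, hTapp]
    simp only [LinearMap.coe_comp, Function.comp_apply, LinearMap.flip_apply,
      map_add, map_sum, map_smul, LinearMap.add_apply, LinearMap.sum_apply,
      LinearMap.smul_apply]
    linear_combination (norm := module) hI0
  have hTrangeIdeal : ∀ x ∈ LinearMap.range T, ∀ y : L,
      mul x y ∈ LinearMap.range T ∧ mul y x ∈ LinearMap.range T := by
    rintro x hx y
    obtain ⟨g, rfl⟩ := hx
    have hmem : mul (T g) y ∈ LinearMap.range T :=
      ⟨-(g.comp (mul.flip y)), by rw [map_neg, hTflip, neg_neg]⟩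
    exact ⟨hmem, by rw [hskew y (T g)]; exact neg_mem hmem⟩
  have hTrange : LinearMap.range T = ⊤ := by
    rcases hsimp2 (LinearMap.range T) hTrangeIdeal with h | h
    · exact absurd (LinearMap.range_eq_bot.mp h) hTne
    · exact h
  have hTsurj : Function.Surjective T := LinearMap.range_eq_top.mp hTrange
  have hTker : LinearMap.ker T = ⊥ := by
    have h1 := LinearMap.finrank_range_add_finrank_ker T
    rw [hTrange, finrank_top, Subspace.dual_finrank_eq] at h1
    have h2 : Module.finrank F (LinearMap.ker T) = 0 := by omega
    exact Submodule.finrank_eq_zero.mp h2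
  have hTinj : Function.Injective T := LinearMap.ker_eq_bot.mp hTker
  let Te : Module.Dual F L ≃ₗ[F] L := LinearEquiv.ofBijective T ⟨hTinj, hTsurj⟩
  have hhp := hom_plus mul a b hanti hcybe hinv
  have hhm := hom_minus mul a b hanti hcybe hinv
  -- anticommutativity of the double
  have hanti2 : ∀ p : L × Module.Dual F L, dmul mul (Δr mul a b) p p = 0 := by
    rintro ⟨x, f⟩
    have hI0 := inv_contract mul a b hinv f x
    simp only [Finset.sum_add_distrib] at hI0
    refine Prod.ext ?_ ?_
    · rw [dmul_fst]
      have h1 : ∀ i : Fin n, mul x (b i) = -mul (b i) x := fun i => hskew x (b i)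
      simp only [hanti, h1, map_neg, smul_neg, neg_smul, Finset.sum_neg_distrib,
        Finset.sum_sub_distrib]
      show _ = (0 : L)
      linear_combination (norm := module) hI0
    · show (dmul mul (Δr mul a b) (x, f) (x, f)).2 = (0 : Module.Dual F L)
      ext c
      rw [dmul_snd]
      have hI := inv_contract mul a b hinv f c
      have hfI := congrArg f hI
      simp only [map_sum, map_add, map_smul, map_zero, smul_eq_mul] at hfI
      simp only [Finset.sum_add_distrib] at hfI
      have e1 : (∑ i, f (mul (b i) c) * f (a i)) = ∑ i, f (a i) * f (mul (b i) c) :=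
        Finset.sum_congr rfl fun i _ => mul_comm _ _
      have e2 : (∑ i, f (b i) * f (mul (a i) c)) = ∑ i, f (mul (a i) c) * f (b i) :=
        Finset.sum_congr rfl fun i _ => mul_comm _ _
      rw [e1, e2] at hfI
      have h1 : ∀ i : Fin n, f (mul c (b i)) = -f (mul (b i) c) := fun i => by
        rw [hskew c (b i), map_neg]
      have h2 : f (mul c x) = -f (mul x c) := by rw [hskew c x, map_neg]
      simp only [h1, h2, mul_neg, sub_neg_eq_add, Finset.sum_add_distrib,
        LinearMap.zero_apply]
      linear_combination hfI / 2
  -- ideals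
  have hId1 : IsIdealP (dmul mul (Δr mul a b)) (LinearMap.ker (dpP (F := F) a b)) := by
    intro x hx y
    rw [LinearMap.mem_ker] at hx
    constructor
    · rw [LinearMap.mem_ker, hhp, hx]; simp
    · rw [LinearMap.mem_ker, hhp, hx]; simp
  have hId2 : IsIdealP (dmul mul (Δr mul a b)) (LinearMap.ker (dpM (F := F) a b)) := by
    intro x hx y
    rw [LinearMap.mem_ker] at hx
    constructor
    · rw [LinearMap.mem_ker, hhm, hx]; simp
    · rw [LinearMap.mem_ker, hhm, hx]; simp
  -- disjointness
  have hdisjeq : LinearMap.ker (dpP (F := F) a b) ⊓ LinearMap.ker (dpM (F := F) a b) = ⊥ := by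
    apply (Submodule.eq_bot_iff _).mpr
    rintro ⟨z1, z2⟩ hz
    obtain ⟨h1, h2⟩ := Submodule.mem_inf.mp hz
    rw [LinearMap.mem_ker, dpP_apply] at h1
    rw [LinearMap.mem_ker, dpM_apply] at h2
    have e : T z2 = 0 := by
      rw [hTapp]
      have : (∑ i, z2 (b i) • a i) + ∑ i, z2 (a i) • b i
          = (z1 + ∑ i, z2 (b i) • a i) - (z1 - ∑ i, z2 (a i) • b i) := by abel
      rw [this, h1, h2, sub_zero]
    have hz2 : z2 = 0 := hTinj (by rw [e, map_zero])
    have hz1 : z1 = 0 := by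
      rw [hz2] at h1; simpa using h1
    simp [hz1, hz2]
  -- dimensions
  have hfrD : Module.finrank F (L × Module.Dual F L) = 2 * Module.finrank F L := by
    rw [Module.finrank_prod, Subspace.dual_finrank_eq]; ring
  have hsurjP : LinearMap.range (dpP (F := F) a b) = ⊤ := by
    rw [LinearMap.range_eq_top]
    intro z; exact ⟨(z, 0), by simp [dpP_apply]⟩
  have hsurjM : LinearMap.range (dpM (F := F) a b) = ⊤ := by
    rw [LinearMap.range_eq_top]
    intro z; exact ⟨(z, 0), by simp [dpM_apply]⟩
  have hk1 : Module.finrank F (LinearMap.ker (dpP (F := F) a b)) = Module.finrank F L := by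
    have h1 := LinearMap.finrank_range_add_finrank_ker (dpP (F := F) a b)
    rw [hsurjP, finrank_top, hfrD] at h1; omega
  have hk2 : Module.finrank F (LinearMap.ker (dpM (F := F) a b)) = Module.finrank F L := by
    have h1 := LinearMap.finrank_range_add_finrank_ker (dpM (F := F) a b)
    rw [hsurjM, finrank_top, hfrD] at h1; omega
  have hsup : LinearMap.ker (dpP (F := F) a b) ⊔ LinearMap.ker (dpM (F := F) a b) = ⊤ := by
    apply Submodule.eq_top_of_finrank_eq
    have h1 := Submodule.finrank_sup_add_finrank_inf_eq
      (LinearMap.ker (dpP (F := F) a b)) (LinearMap.ker (dpM (F := F) a b))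
    rw [hdisjeq, finrank_bot, hk1, hk2, add_zero] at h1
    rw [h1, hfrD]; ring
  have hcompl : IsCompl (LinearMap.ker (dpP (F := F) a b)) (LinearMap.ker (dpM (F := F) a b)) :=
    ⟨disjoint_iff.mpr hdisjeq, codisjoint_iff.mpr hsup⟩
  have hnpos : 0 < Module.finrank F L := Module.finrank_pos
  have hb1 : LinearMap.ker (dpP (F := F) a b) ≠ ⊥ := by
    intro h; rw [h, finrank_bot] at hk1; omega
  have hb2 : LinearMap.ker (dpM (F := F) a b) ≠ ⊥ := by
    intro h; rw [h, finrank_bot] at hk2; omega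
  have ht1 : LinearMap.ker (dpP (F := F) a b) ≠ ⊤ := by
    intro h
    have hm : (x₀, (0 : Module.Dual F L)) ∈ LinearMap.ker (dpP (F := F) a b) :=
      h ▸ Submodule.mem_top
    rw [LinearMap.mem_ker, dpP_apply] at hm
    simp at hm
    exact hx₀ hm
  have ht2 : LinearMap.ker (dpM (F := F) a b) ≠ ⊤ := by
    intro h
    have hm : (x₀, (0 : Module.Dual F L)) ∈ LinearMap.ker (dpM (F := F) a b) :=
      h ▸ Submodule.mem_top
    rw [LinearMap.mem_ker, dpM_apply] at hm
    simp at hm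
    exact hx₀ hm
  -- the equivalences
  let S1 : L →ₗ[F] Module.Dual F L := Te.symm.toLinearMap
  have hTS1 : ∀ u : L, T (S1 u) = u := fun u => Te.apply_symm_apply u
  have hS1T : ∀ f : Module.Dual F L, S1 (T f) = f := fun f => Te.symm_apply_apply f
  -- e₁ : L ≃ ker dpP
  let ψ₁ : L →ₗ[F] L × Module.Dual F L := LinearMap.prod ((Rmat a b).comp S1) (-S1)
  have hψ₁app : ∀ u : L, ψ₁ u = (Rmat a b (S1 u), -(S1 u)) := fun u => rfl
  have hψ₁mem : ∀ u : L, ψ₁ u ∈ LinearMap.ker (dpP (F := F) a b) := by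
    intro u
    rw [LinearMap.mem_ker, dpP_apply, hψ₁app]
    simp [Rmat_apply]
  have hψ₁inj : Function.Injective ψ₁ := by
    intro u v h
    have h2 := congrArg Prod.snd h
    rw [hψ₁app, hψ₁app] at h2
    have h3 : S1 u = S1 v := by simpa using h2
    exact Te.symm.injective h3
  have hψ₁surj : ∀ z ∈ LinearMap.ker (dpP (F := F) a b), ∃ u, ψ₁ u = z := by
    rintro ⟨z1, z2⟩ hz
    rw [LinearMap.mem_ker, dpP_apply] at hz
    refine ⟨T (-z2), ?_⟩
    have hS : S1 (T (-z2)) = -z2 := hS1T (-z2)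
    rw [hψ₁app, hS, neg_neg]
    have hz1 : Rmat a b (-z2) = z1 := by
      rw [map_neg, Rmat_apply]
      rw [show z1 = z1 + ((∑ i, z2 (b i) • a i) - (∑ i, z2 (b i) • a i)) by abel]
      rw [show z1 + ((∑ i, z2 (b i) • a i) - (∑ i, z2 (b i) • a i))
          = (z1 + ∑ i, z2 (b i) • a i) - (∑ i, z2 (b i) • a i) by abel, hz]
      abel
    rw [hz1]
  let e₁' : L →ₗ[F] (LinearMap.ker (dpP (F := F) a b)) :=
    ψ₁.codRestrict (LinearMap.ker (dpP (F := F) a b)) hψ₁mem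
  have he₁bij : Function.Bijective e₁' := by
    constructor
    · intro u v h
      exact hψ₁inj (congrArg Subtype.val h)
    · rintro ⟨z, hz⟩
      obtain ⟨u, hu⟩ := hψ₁surj z hz
      exact ⟨u, Subtype.ext hu⟩
  let e₁ : L ≃ₗ[F] (LinearMap.ker (dpP (F := F) a b)) := LinearEquiv.ofBijective e₁' he₁bij
  have he₁coe : ∀ u : L, (e₁ u : L × Module.Dual F L) = ψ₁ u := fun u => rfl
  have hPMe₁ : ∀ u : L, dpM (F := F) a b (e₁ u : L × Module.Dual F L) = u := by
    intro u
    rw [he₁coe, hψ₁app, dpM_apply]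
    have : (Rmat a b (S1 u) - ∑ i, (-(S1 u)) (a i) • b i : L) = T (S1 u) := by
      rw [hTapp, Rmat_apply]
      simp only [LinearMap.neg_apply, neg_smul, Finset.sum_neg_distrib]
      abel
    rw [this, hTS1]
  have huniqP : ∀ z w : L × Module.Dual F L, z ∈ LinearMap.ker (dpP (F := F) a b) →
      w ∈ LinearMap.ker (dpP (F := F) a b) → dpM (F := F) a b z = dpM (F := F) a b w → z = w := by
    intro z w hz hw he
    have hm : z - w ∈ LinearMap.ker (dpP (F := F) a b) ⊓ LinearMap.ker (dpM (F := F) a b) :=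
      Submodule.mem_inf.mpr ⟨sub_mem hz hw,
        by rw [LinearMap.mem_ker, map_sub, he, sub_self]⟩
    rw [hdisjeq] at hm
    exact sub_eq_zero.mp ((Submodule.mem_bot F).mp hm)
  have hcompat1 : ∀ u v : L, (e₁ (mul u v) : L × Module.Dual F L)
      = dmul mul (Δr mul a b) (e₁ u) (e₁ v) := by
    intro u v
    apply huniqP _ _ (e₁ (mul u v)).2 ((hId1 (e₁ u) (e₁ u).2 (e₁ v)).1)
    rw [hPMe₁, hhm, hPMe₁, hPMe₁]
  -- e₂ : L ≃ ker dpM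
  let ψ₂ : L →ₗ[F] L × Module.Dual F L := LinearMap.prod ((Rmat b a).comp S1) S1
  have hψ₂app : ∀ u : L, ψ₂ u = (Rmat b a (S1 u), S1 u) := fun u => rfl
  have hψ₂mem : ∀ u : L, ψ₂ u ∈ LinearMap.ker (dpM (F := F) a b) := by
    intro u
    rw [LinearMap.mem_ker, dpM_apply, hψ₂app]
    simp [Rmat_apply]
  have hψ₂inj : Function.Injective ψ₂ := by
    intro u v h
    have h2 := congrArg Prod.snd h
    rw [hψ₂app, hψ₂app] at h2
    exact Te.symm.injective h2
  have hψ₂surj : ∀ z ∈ LinearMap.ker (dpM (F := F) a b), ∃ u, ψ₂ u = z := by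
    rintro ⟨z1, z2⟩ hz
    rw [LinearMap.mem_ker, dpM_apply] at hz
    refine ⟨T z2, ?_⟩
    have hS : S1 (T z2) = z2 := hS1T z2
    rw [hψ₂app, hS]
    have hz1 : Rmat b a z2 = z1 := by
      rw [Rmat_apply]
      rw [show (∑ i, z2 (a i) • b i) = z1 - (z1 - ∑ i, z2 (a i) • b i) by abel, hz]
      abel
    rw [hz1]
  let e₂' : L →ₗ[F] (LinearMap.ker (dpM (F := F) a b)) :=
    ψ₂.codRestrict (LinearMap.ker (dpM (F := F) a b)) hψ₂mem
  have he₂bij : Function.Bijective e₂' := by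
    constructor
    · intro u v h
      exact hψ₂inj (congrArg Subtype.val h)
    · rintro ⟨z, hz⟩
      obtain ⟨u, hu⟩ := hψ₂surj z hz
      exact ⟨u, Subtype.ext hu⟩
  let e₂ : L ≃ₗ[F] (LinearMap.ker (dpM (F := F) a b)) := LinearEquiv.ofBijective e₂' he₂bij
  have he₂coe : ∀ u : L, (e₂ u : L × Module.Dual F L) = ψ₂ u := fun u => rfl
  have hPPe₂ : ∀ u : L, dpP (F := F) a b (e₂ u : L × Module.Dual F L) = u := by
    intro u
    rw [he₂coe, hψ₂app, dpP_apply]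
    have : (Rmat b a (S1 u) + ∑ i, (S1 u) (b i) • a i : L) = T (S1 u) := by
      rw [hTapp, Rmat_apply]
      abel
    rw [this, hTS1]
  have huniqM : ∀ z w : L × Module.Dual F L, z ∈ LinearMap.ker (dpM (F := F) a b) →
      w ∈ LinearMap.ker (dpM (F := F) a b) → dpP (F := F) a b z = dpP (F := F) a b w → z = w := by
    intro z w hz hw he
    have hm : z - w ∈ LinearMap.ker (dpP (F := F) a b) ⊓ LinearMap.ker (dpM (F := F) a b) :=
      Submodule.mem_inf.mpr ⟨by rw [LinearMap.mem_ker, map_sub, he, sub_self],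
        sub_mem hz hw⟩
    rw [hdisjeq] at hm
    exact sub_eq_zero.mp ((Submodule.mem_bot F).mp hm)
  have hcompat2 : ∀ u v : L, (e₂ (mul u v) : L × Module.Dual F L)
      = dmul mul (Δr mul a b) (e₂ u) (e₂ v) := by
    intro u v
    apply huniqM _ _ (e₂ (mul u v)).2 ((hId2 (e₂ u) (e₂ u).2 (e₂ v)).1)
    rw [hPPe₂, hhp, hPPe₂, hPPe₂]
  -- simplicity
  have hsimp1 : IsSimpleIdealP (dmul mul (Δr mul a b)) (LinearMap.ker (dpP (F := F) a b)) := by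
    constructor
    · refine ⟨e₁ x₀, (e₁ x₀).2, e₁ y₀, (e₁ y₀).2, ?_⟩
      rw [← hcompat1]
      intro h
      apply hxy₀
      have h0 : e₁ (mul x₀ y₀) = 0 := Subtype.ext (by simpa using h)
      exact (LinearEquiv.map_eq_zero_iff e₁).mp h0
    · intro J hJle hJid
      set I : Submodule F L :=
        Submodule.comap ((Submodule.subtype _).comp e₁.toLinearMap) J with hIdef
      have hmem : ∀ u : L, u ∈ I ↔ (e₁ u : L × Module.Dual F L) ∈ J := fun u => Iff.rfl
      have hIid : ∀ u ∈ I, ∀ y : L, mul u y ∈ I ∧ mul y u ∈ I := by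
        intro u hu y
        constructor
        · rw [hmem, hcompat1]
          exact (hJid _ ((hmem u).mp hu) _ (e₁ y).2).1
        · rw [hmem, hcompat1]
          exact (hJid _ ((hmem u).mp hu) _ (e₁ y).2).2
      rcases hsimp2 I hIid with h | h
      · left
        apply (Submodule.eq_bot_iff _).mpr
        intro z hzJ
        have hzk : z ∈ LinearMap.ker (dpP (F := F) a b) := hJle hzJ
        have hcz : (e₁ (e₁.symm ⟨z, hzk⟩) : L × Module.Dual F L) = z := by
          rw [LinearEquiv.apply_symm_apply]
        have hui : e₁.symm ⟨z, hzk⟩ ∈ I := (hmem _).mpr (by rw [hcz]; exact hzJ)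
        rw [h] at hui
        have h0 : e₁.symm ⟨z, hzk⟩ = 0 := (Submodule.mem_bot F).mp hui
        rw [h0, map_zero] at hcz
        rw [← hcz]
        rfl
      · right
        apply le_antisymm hJle
        intro z hz
        have hcz : (e₁ (e₁.symm ⟨z, hz⟩) : L × Module.Dual F L) = z := by
          rw [LinearEquiv.apply_symm_apply]
        have : e₁.symm ⟨z, hz⟩ ∈ I := h ▸ Submodule.mem_top
        rw [hmem] at this
        rwa [hcz] at this
  have hsimp3 : IsSimpleIdealP (dmul mul (Δr mul a b)) (LinearMap.ker (dpM (F := F) a b)) := by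
    constructor
    · refine ⟨e₂ x₀, (e₂ x₀).2, e₂ y₀, (e₂ y₀).2, ?_⟩
      rw [← hcompat2]
      intro h
      apply hxy₀
      have h0 : e₂ (mul x₀ y₀) = 0 := Subtype.ext (by simpa using h)
      exact (LinearEquiv.map_eq_zero_iff e₂).mp h0
    · intro J hJle hJid
      set I : Submodule F L :=
        Submodule.comap ((Submodule.subtype _).comp e₂.toLinearMap) J with hIdef
      have hmem : ∀ u : L, u ∈ I ↔ (e₂ u : L × Module.Dual F L) ∈ J := fun u => Iff.rfl
      have hIid : ∀ u ∈ I, ∀ y : L, mul u y ∈ I ∧ mul y u ∈ I := by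
        intro u hu y
        constructor
        · rw [hmem, hcompat2]
          exact (hJid _ ((hmem u).mp hu) _ (e₂ y).2).1
        · rw [hmem, hcompat2]
          exact (hJid _ ((hmem u).mp hu) _ (e₂ y).2).2
      rcases hsimp2 I hIid with h | h
      · left
        apply (Submodule.eq_bot_iff _).mpr
        intro z hzJ
        have hzk : z ∈ LinearMap.ker (dpM (F := F) a b) := hJle hzJ
        have hcz : (e₂ (e₂.symm ⟨z, hzk⟩) : L × Module.Dual F L) = z := by
          rw [LinearEquiv.apply_symm_apply]
        have hui : e₂.symm ⟨z, hzk⟩ ∈ I := (hmem _).mpr (by rw [hcz]; exact hzJ)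
        rw [h] at hui
        have h0 : e₂.symm ⟨z, hzk⟩ = 0 := (Submodule.mem_bot F).mp hui
        rw [h0, map_zero] at hcz
        rw [← hcz]
        rfl
      · right
        apply le_antisymm hJle
        intro z hz
        have hcz : (e₂ (e₂.symm ⟨z, hz⟩) : L × Module.Dual F L) = z := by
          rw [LinearEquiv.apply_symm_apply]
        have : e₂.symm ⟨z, hz⟩ ∈ I := h ▸ Submodule.mem_top
        rw [hmem] at this
        rwa [hcz] at this
  exact ⟨hanti2, LinearMap.ker (dpP (F := F) a b), LinearMap.ker (dpM (F := F) a b),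
    hb1, ht1, hb2, ht2, hcompl, hId1, hId2, hsimp1, hsimp3,
    ⟨e₁, hcompat1⟩, ⟨e₂, hcompat2⟩⟩
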